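/- For D = 1 and every n ≥ 1, the reduced word of φⁿ(c₁) has length 2^{n+1} − 1. -/

import Mathlib

abbrev G : Type := FreeGroup (ℤ ⊕ ℤ)

/-- generator cₙ -/
def c (n : ℤ) : G := FreeGroup.of (Sum.inl n)
/-- generator uₙ -/
def u (n : ℤ) : G := FreeGroup.of (Sum.inr n)

/-- F = c₁ c₂ ⋯ c_D -/
def F (D : ℕ) : G := ((List.range D).map (fun i => c ((i : ℤ) + 1))).prod

/-- the tangle endomorphism for minimum delay time D -/
def φ (D : ℕ) : G →* G := FreeGroup.lift fun x =>
  match x with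
  | Sum.inl n => if n = (D : ℤ) then (F D)⁻¹ * (u 0)⁻¹ * F D else c (n + 1)
  | Sum.inr n => u (n + 1)

-- chain lemma
lemma reduce_eq_self_of_chain {α : Type*} [DecidableEq α] :
    ∀ L : List (α × Bool), L.Chain' (fun a b => ¬(a.1 = b.1 ∧ a.2 = !b.2)) →
    FreeGroup.reduce L = L := by
  intro L
  induction L with
  | nil => intro _; rfl
  | cons x t ih =>
    intro h
    rw [FreeGroup.reduce.cons, ih h.tail]
    cases t with
    | nil => rfl
    | cons y s =>
      have := List.isChain_cons_cons.mp h
      simp [this.1]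

def W : ℕ → List ((ℤ ⊕ ℤ) × Bool)
  | 0 => [(Sum.inl 1, true)]
  | n + 1 => FreeGroup.invRev (W n) ++ (Sum.inr (n : ℤ), false) :: W n

lemma F_one : F 1 = c 1 := by simp [F, List.range_succ]

lemma phi_c1 : φ 1 (c 1) = (c 1)⁻¹ * (u 0)⁻¹ * c 1 := by
  simp [φ, c, F_one]

lemma phi_u (k : ℤ) : φ 1 (u k) = u (k + 1) := by
  simp [φ, u]

lemma iter_u (n : ℕ) : (⇑(φ 1))^[n] (u 0) = u n := by
  induction n with
  | zero => simp
  | succ n ih => rw [Function.iterate_succ_apply', ih, phi_u]; norm_num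

lemma mk_W (n : ℕ) : FreeGroup.mk (W n) = (⇑(φ 1))^[n] (c 1) := by
  induction n with
  | zero => simp [W, c, FreeGroup.of]
  | succ n ih =>
    rw [Function.iterate_succ_apply, phi_c1]
    rw [iterate_map_mul, iterate_map_mul, iterate_map_inv, iterate_map_inv, iter_u, ← ih]
    show FreeGroup.mk (FreeGroup.invRev (W n) ++ (Sum.inr (n:ℤ), false) :: W n) = _
    rw [← FreeGroup.mul_mk, ← FreeGroup.inv_mk]
    have : FreeGroup.mk ((Sum.inr (n:ℤ), false) :: W n) = (u n)⁻¹ * FreeGroup.mk (W n) := by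
      have h1 : u (n:ℤ) = FreeGroup.mk [(Sum.inr (n:ℤ), true)] := rfl
      rw [h1, FreeGroup.inv_mk, FreeGroup.mul_mk]
      simp [FreeGroup.invRev]
    rw [this, mul_assoc]

def Ok (a b : (ℤ ⊕ ℤ) × Bool) : Prop := ¬(a.1 = b.1 ∧ a.2 = !b.2)


def flipB (a : (ℤ ⊕ ℤ) × Bool) : (ℤ ⊕ ℤ) × Bool := (a.1, !a.2)

lemma invRev_head? (L : List ((ℤ ⊕ ℤ) × Bool)) :
    (FreeGroup.invRev L).head? = Option.map flipB L.getLast? := by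
  simp [FreeGroup.invRev, List.head?_reverse, List.getLast?_map]; rfl

lemma invRev_getLast? (L : List ((ℤ ⊕ ℤ) × Bool)) :
    (FreeGroup.invRev L).getLast? = Option.map flipB L.head? := by
  simp [FreeGroup.invRev, List.getLast?_reverse, List.head?_map]; rfl

lemma W_spec (n : ℕ) : (W n).Chain' Ok ∧ (W n).head? = some (Sum.inl 1, decide (n = 0)) ∧
    (W n).getLast? = some (Sum.inl 1, true) := by
  induction n with
  | zero => simp [W, List.Chain']
  | succ n ih =>
    obtain ⟨hc, hh, hl⟩ := ih
    have hne : W n ≠ [] := by intro h; rw [h] at hh; simp at hh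
    have hinvne : FreeGroup.invRev (W n) ≠ [] := by
      simp [FreeGroup.invRev, hne]
    refine ⟨?_, ?_, ?_⟩
    · rw [W]
      apply List.IsChain.append
      · unfold FreeGroup.invRev
        apply List.isChain_reverse.mpr
        apply List.isChain_map_of_isChain _ ?_ hc
        intro a b hab
        simp only [Ok, flip] at *
        rintro ⟨h1, h2⟩
        exact hab ⟨h1.symm, by simp at h2 ⊢; simp [h2]⟩
      · refine List.isChain_cons.mpr ⟨?_, hc⟩
        intro y hy
        rw [hh] at hy
        simp at hy
        subst hy
        simp [Ok]
      · intro x hx y hy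
        rw [invRev_getLast?, hh] at hx
        simp [flipB] at hx
        simp at hy
        subst hx; subst hy
        simp [Ok]
    · rw [W, List.head?_append, invRev_head?, hl]
      rfl
    · rw [W, List.getLast?_append, List.getLast?_cons, hl]
      simp [hne, hl]

lemma W_length (n : ℕ) : (W n).length = 2 ^ (n + 1) - 1 := by
  induction n with
  | zero => simp [W]
  | succ n ih =>
    rw [W]
    simp only [List.length_append, List.length_cons, FreeGroup.invRev_length, ih]
    have : 1 ≤ 2 ^ (n + 1) := Nat.one_le_two_pow
    omega

theorem stmt_11 (n : ℕ) (hn : 1 ≤ n) :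
    ((⇑(φ 1))^[n] (c 1)).toWord.length = 2 ^ (n + 1) - 1 := by
  rw [← mk_W, FreeGroup.toWord_mk, reduce_eq_self_of_chain _ (W_spec n).1, W_length]
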